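/- arXiv:2402.15065 — 4 statements merged into one kernel-verified Lean document; each statement's English description precedes it below -/
import Mathlib

section
/- Let Ω ⊆ ℂ be open and let f : Ω → ℂ be holomorphic with f'(z) ≠ 0 for all z ∈ Ω. Define φ : Ω → ℝ by φ(z) := log|f'(z)|. Then for every z ∈ Ω: φ_zz(z) − (φ_z(z))² = (1/2)·Sf(z), where Sf := f'''/f' − (3/2)(f''/f')² is the Schwarzian derivative of f. (Equivalently, the Schwarzian tensor satisfies Q(g_euc, f*g_euc) = (1/2)Sf.) -/
open Complex

/-- Wirtinger derivative ∂/∂z: f_z = (1/2)(∂f/∂x − i ∂f/∂y). -/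
noncomputable def wz (f : ℂ → ℂ) (z : ℂ) : ℂ :=
  (1/2) * (fderiv ℝ f z 1 - Complex.I * fderiv ℝ f z Complex.I)

/-- The Schwarzian derivative Sf = f'''/f' − (3/2)(f''/f')². -/
noncomputable def schwarzian (f : ℂ → ℂ) (z : ℂ) : ℂ :=
  deriv (deriv (deriv f)) z / deriv f z - (3/2) * (deriv (deriv f) z / deriv f z) ^ 2

lemma wz_congr {f g : ℂ → ℂ} {z : ℂ} (h : f =ᶠ[nhds z] g) : wz f z = wz g z := by
  rw [wz, wz, h.fderiv_eq]

lemma wz_eq_of_hasDerivAt {h : ℂ → ℂ} {d z : ℂ} (hd : HasDerivAt h d z) :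
    wz h z = d := by
  rw [wz, (hd.hasFDerivAt.restrictScalars ℝ).fderiv]
  simp [ContinuousLinearMap.smulRight_apply, smul_eq_mul]
  have : Complex.I * (Complex.I * d) = -d := by
    rw [← mul_assoc, Complex.I_mul_I]; ring
  rw [this]; ring

lemma wz_re_eq {L : ℂ → ℂ} {d z : ℂ} (hd : HasDerivAt L d z) :
    wz (fun w => ((L w).re : ℂ)) z = (1/2) * d := by
  have h1 : HasFDerivAt (fun w => (((L w).re : ℝ) : ℂ))
      (Complex.ofRealCLM.comp (Complex.reCLM.comp
        ((ContinuousLinearMap.smulRight (1 : ℂ →L[ℂ] ℂ) d).restrictScalars ℝ))) z :=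
    Complex.ofRealCLM.hasFDerivAt.comp _
      (Complex.reCLM.hasFDerivAt.comp _ (hd.hasFDerivAt.restrictScalars ℝ))
  rw [wz, h1.fderiv]
  simp only [ContinuousLinearMap.coe_comp', Function.comp_apply,
    ContinuousLinearMap.coe_restrictScalars', ContinuousLinearMap.smulRight_apply,
    ContinuousLinearMap.one_apply, smul_eq_mul, one_mul, Complex.ofRealCLM_apply,
    Complex.reCLM_apply]
  have h1 : ((Complex.I * d).re : ℂ) = (-d.im : ℝ) := by
    norm_num [Complex.mul_re]
  rw [h1]
  push_cast
  have := Complex.re_add_im d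
  rw [mul_comm Complex.I d] at *
  linear_combination (1/2 : ℂ) * (Complex.re_add_im d)

lemma wz_log_abs {g : ℂ → ℂ} {z : ℂ} (hg : DifferentiableAt ℂ g z) (h0 : g z ≠ 0) :
    wz (fun w => (Real.log ‖g w‖ : ℂ)) z = (1/2) * (deriv g z / g z) := by
  set c : ℂ := (‖g z‖ : ℂ) / g z with hc
  have hcabs : ‖c‖ = 1 := by
    rw [hc, norm_div, Complex.norm_real, norm_norm,
      div_self (by simpa using h0)]
  have hc0 : c ≠ 0 := fun h => by simp [h] at hcabs
  have hval : c * g z = (‖g z‖ : ℂ) := by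
    rw [hc]; field_simp
  have hmem : c * g z ∈ Complex.slitPlane := by
    rw [hval]
    exact Complex.ofReal_mem_slitPlane.2 (norm_pos_iff.mpr h0)
  have hL : HasDerivAt (fun w => Complex.log (c * g w))
      ((c * deriv g z) / (c * g z)) z :=
    HasDerivAt.clog (hg.hasDerivAt.const_mul c) hmem
  have heq : (fun w => ((Real.log ‖g w‖ : ℝ) : ℂ)) =
      fun w => ((Complex.log (c * g w)).re : ℂ) := by
    funext w
    rw [Complex.log_re, norm_mul, hcabs, one_mul]
  rw [heq, wz_re_eq hL, mul_div_mul_left _ _ hc0]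

theorem stmt6 (Ω : Set ℂ) (hΩ : IsOpen Ω) (f : ℂ → ℂ)
    (hf : DifferentiableOn ℂ f Ω) (hf' : ∀ z ∈ Ω, deriv f z ≠ 0) :
    ∀ z ∈ Ω,
      wz (wz (fun w => (Real.log ‖deriv f w‖ : ℂ))) z -
        (wz (fun w => (Real.log ‖deriv f w‖ : ℂ)) z) ^ 2 =
      (1/2) * schwarzian f z := by
  intro z hz
  have hA : AnalyticOnNhd ℂ f Ω := hf.analyticOnNhd hΩ
  have hg : ∀ w ∈ Ω, AnalyticAt ℂ (deriv f) w := hA.deriv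
  have inner_eq : ∀ w ∈ Ω, wz (fun u => (Real.log ‖deriv f u‖ : ℂ)) w
      = (1/2) * (deriv (deriv f) w / deriv f w) :=
    fun w hw => wz_log_abs (hg w hw).differentiableAt (hf' w hw)
  have hEv : (wz (fun u => (Real.log ‖deriv f u‖ : ℂ)))
      =ᶠ[nhds z] (fun w => (1/2) * (deriv (deriv f) w / deriv f w)) := by
    filter_upwards [hΩ.mem_nhds hz] with w hw using inner_eq w hw
  have hF : HasDerivAt (fun w => (1/2) * (deriv (deriv f) w / deriv f w))
      ((1/2) * ((deriv (deriv (deriv f)) z * deriv f z -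
        deriv (deriv f) z * deriv (deriv f) z) / deriv f z ^ 2)) z :=
    (HasDerivAt.div (((hA.deriv).deriv z hz).differentiableAt.hasDerivAt)
      ((hg z hz).differentiableAt.hasDerivAt) (hf' z hz)).const_mul _
  rw [wz_congr hEv, wz_eq_of_hasDerivAt hF, inner_eq z hz, schwarzian]
  have h0 := hf' z hz
  field_simp [h0]
  ring
end

section
/- Let Ω ⊆ ℂ be open and connected and let φ : Ω → ℝ be three times continuously real-differentiable. Define Q : Ω → ℂ by Q := φ_zz − (φ_z)² and K : Ω → ℝ by K := −4e^{−2φ}·φ_zz̄ (the Gaussian curvature of the conformal metric e^{2φ}g_euc; note φ_zz̄ is real-valued). Then Q is holomorphic on Ω (i.e., complex-differentiable, equivalently Q_z̄ ≡ 0) if and only if K is constant on Ω. -/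
open Complex Topology Filter

/-- Wirtinger derivative ∂/∂z̄: f_z̄ = (1/2)(∂f/∂x + i ∂f/∂y). -/
noncomputable def wzbar (f : ℂ → ℂ) (z : ℂ) : ℂ :=
  (1/2) * (fderiv ℝ f z 1 + Complex.I * fderiv ℝ f z Complex.I)

section Helpers

lemma contDiffAt_dir {g : ℂ → ℂ} {n : WithTop ℕ∞} {z : ℂ} (v : ℂ)
    (hg : ContDiffAt ℝ (n+1) g z) : ContDiffAt ℝ n (fun x => fderiv ℝ g x v) z :=
  (hg.fderiv_right le_rfl).clm_apply contDiffAt_const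

lemma contDiffAt_wz {g : ℂ → ℂ} {n : WithTop ℕ∞} {z : ℂ}
    (hg : ContDiffAt ℝ (n+1) g z) : ContDiffAt ℝ n (wz g) z := by
  unfold wz
  exact contDiffAt_const.mul ((contDiffAt_dir 1 hg).sub
    (contDiffAt_const.mul (contDiffAt_dir Complex.I hg)))

lemma contDiffAt_wzbar {g : ℂ → ℂ} {n : WithTop ℕ∞} {z : ℂ}
    (hg : ContDiffAt ℝ (n+1) g z) : ContDiffAt ℝ n (wzbar g) z := by
  unfold wzbar
  exact contDiffAt_const.mul ((contDiffAt_dir 1 hg).add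
    (contDiffAt_const.mul (contDiffAt_dir Complex.I hg)))

lemma fderiv_dir {g : ℂ → ℂ} {z : ℂ} (v w : ℂ)
    (hg : DifferentiableAt ℝ (fderiv ℝ g) z) :
    fderiv ℝ (fun x => fderiv ℝ g x v) z w = fderiv ℝ (fderiv ℝ g) z w v := by
  rw [fderiv_clm_apply hg (differentiableAt_const v)]
  simp

lemma diffAt_dir {g : ℂ → ℂ} {z : ℂ} (v : ℂ)
    (hg : DifferentiableAt ℝ (fderiv ℝ g) z) :
    DifferentiableAt ℝ (fun x => fderiv ℝ g x v) z :=
  hg.clm_apply (differentiableAt_const v)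

lemma fderiv_wz_apply {g : ℂ → ℂ} {z : ℂ} (hg : ContDiffAt ℝ 2 g z) (w : ℂ) :
    fderiv ℝ (wz g) z w
      = (1/2) * (fderiv ℝ (fderiv ℝ g) z w 1
          - Complex.I * fderiv ℝ (fderiv ℝ g) z w Complex.I) := by
  have hd : DifferentiableAt ℝ (fderiv ℝ g) z :=
    (hg.fderiv_right (m := 1) (by norm_num)).differentiableAt one_ne_zero
  have h1 := diffAt_dir 1 hd
  have hI := diffAt_dir Complex.I hd
  unfold wz
  rw [fderiv_const_mul (h1.fun_sub (hI.const_mul _)) _,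
      fderiv_fun_sub h1 (hI.const_mul _), fderiv_const_mul hI]
  simp [fderiv_dir _ _ hd]

lemma fderiv_wzbar_apply {g : ℂ → ℂ} {z : ℂ} (hg : ContDiffAt ℝ 2 g z) (w : ℂ) :
    fderiv ℝ (wzbar g) z w
      = (1/2) * (fderiv ℝ (fderiv ℝ g) z w 1
          + Complex.I * fderiv ℝ (fderiv ℝ g) z w Complex.I) := by
  have hd : DifferentiableAt ℝ (fderiv ℝ g) z :=
    (hg.fderiv_right (m := 1) (by norm_num)).differentiableAt one_ne_zero
  have h1 := diffAt_dir 1 hd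
  have hI := diffAt_dir Complex.I hd
  unfold wzbar
  rw [fderiv_const_mul (h1.fun_add (hI.const_mul _)) _,
      fderiv_fun_add h1 (hI.const_mul _), fderiv_const_mul hI]
  simp [fderiv_dir _ _ hd]
  ring

lemma wzbar_wz_eq {g : ℂ → ℂ} {z : ℂ} (hg : ContDiffAt ℝ 2 g z) :
    wzbar (wz g) z = (1/4) * (fderiv ℝ (fderiv ℝ g) z 1 1
      + fderiv ℝ (fderiv ℝ g) z Complex.I Complex.I) := by
  have hsymm := hg.isSymmSndFDerivAt (by simp [minSmoothness_of_isRCLikeNormedField])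
  have h := hsymm Complex.I 1
  unfold wzbar
  rw [fderiv_wz_apply hg 1, fderiv_wz_apply hg Complex.I]
  rw [← h]
  ring_nf
  rw [Complex.I_sq]
  ring

lemma wz_wzbar_eq {g : ℂ → ℂ} {z : ℂ} (hg : ContDiffAt ℝ 2 g z) :
    wz (wzbar g) z = (1/4) * (fderiv ℝ (fderiv ℝ g) z 1 1
      + fderiv ℝ (fderiv ℝ g) z Complex.I Complex.I) := by
  have hsymm := hg.isSymmSndFDerivAt (by simp [minSmoothness_of_isRCLikeNormedField])
  have h := hsymm Complex.I 1
  unfold wz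
  rw [fderiv_wzbar_apply hg 1, fderiv_wzbar_apply hg Complex.I]
  rw [← h]
  ring_nf
  rw [Complex.I_sq]
  ring

lemma wz_wzbar_comm {g : ℂ → ℂ} {z : ℂ} (hg : ContDiffAt ℝ 2 g z) :
    wz (wzbar g) z = wzbar (wz g) z := by
  rw [wz_wzbar_eq hg, wzbar_wz_eq hg]

lemma wz_mul {g h : ℂ → ℂ} {z : ℂ} (hg : DifferentiableAt ℝ g z)
    (hh : DifferentiableAt ℝ h z) :
    wz (fun w => g w * h w) z = wz g z * h z + g z * wz h z := by
  unfold wz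
  rw [fderiv_fun_mul hg hh]
  simp [smul_eq_mul]
  ring

lemma wzbar_mul {g h : ℂ → ℂ} {z : ℂ} (hg : DifferentiableAt ℝ g z)
    (hh : DifferentiableAt ℝ h z) :
    wzbar (fun w => g w * h w) z = wzbar g z * h z + g z * wzbar h z := by
  unfold wzbar
  rw [fderiv_fun_mul hg hh]
  simp [smul_eq_mul]
  ring

lemma wz_const_mul {g : ℂ → ℂ} {z : ℂ} (c : ℂ) (hg : DifferentiableAt ℝ g z) :
    wz (fun w => c * g w) z = c * wz g z := by
  unfold wz
  rw [fderiv_const_mul hg]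
  simp
  ring

lemma wzbar_const_mul {g : ℂ → ℂ} {z : ℂ} (c : ℂ) (hg : DifferentiableAt ℝ g z) :
    wzbar (fun w => c * g w) z = c * wzbar g z := by
  unfold wzbar
  rw [fderiv_const_mul hg]
  simp
  ring

lemma wz_sub {g h : ℂ → ℂ} {z : ℂ} (hg : DifferentiableAt ℝ g z)
    (hh : DifferentiableAt ℝ h z) :
    wz (fun w => g w - h w) z = wz g z - wz h z := by
  unfold wz
  rw [fderiv_fun_sub hg hh]
  simp
  ring

lemma wzbar_sub {g h : ℂ → ℂ} {z : ℂ} (hg : DifferentiableAt ℝ g z)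
    (hh : DifferentiableAt ℝ h z) :
    wzbar (fun w => g w - h w) z = wzbar g z - wzbar h z := by
  unfold wzbar
  rw [fderiv_fun_sub hg hh]
  simp
  ring

lemma wz_exp {g : ℂ → ℂ} {z : ℂ} (hg : DifferentiableAt ℝ g z) :
    wz (fun w => Complex.exp (g w)) z = Complex.exp (g z) * wz g z := by
  have H : HasFDerivAt (fun w => Complex.exp (g w))
      (Complex.exp (g z) • (fderiv ℝ g z)) z := by
    have he : HasFDerivAt Complex.exp
        (((ContinuousLinearMap.id ℂ ℂ).smulRight (Complex.exp (g z))).restrictScalars ℝ)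
        (g z) := ((Complex.hasDerivAt_exp (g z)).hasFDerivAt).restrictScalars ℝ
    have := he.comp z hg.hasFDerivAt
    refine this.congr_fderiv ?_
    ext v
    simp [smul_eq_mul, mul_comm]
  unfold wz
  rw [H.fderiv]
  simp [smul_eq_mul]
  ring

lemma wzbar_eq_zero_of_diffC {g : ℂ → ℂ} {z : ℂ} (h : DifferentiableAt ℂ g z) :
    wzbar g z = 0 := by
  have hr := h.fderiv_restrictScalars ℝ
  have hI : fderiv ℝ g z Complex.I = Complex.I * fderiv ℝ g z 1 := by
    rw [hr]
    have : (Complex.I : ℂ) = Complex.I • (1 : ℂ) := by simp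
    simp only [ContinuousLinearMap.coe_restrictScalars']
    rw [this, map_smul]
    simp [smul_eq_mul]
  unfold wzbar
  rw [hI]
  ring_nf
  rw [Complex.I_sq]
  ring

lemma diffC_of_wzbar_eq_zero {g : ℂ → ℂ} {z : ℂ} (h : DifferentiableAt ℝ g z)
    (h0 : wzbar g z = 0) : DifferentiableAt ℂ g z := by
  set L := fderiv ℝ g z with hL
  have hIb : L Complex.I = Complex.I * L 1 := by
    unfold wzbar at h0
    have h1 : L 1 + Complex.I * L Complex.I = 0 := by linear_combination 2 * h0
    linear_combination (-Complex.I) * h1 + (L Complex.I) * Complex.I_mul_I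
  have key : ∀ v : ℂ, L v = v * L 1 := by
    intro v
    have hv : v = v.re • (1 : ℂ) + v.im • (Complex.I : ℂ) := by
      simp only [Complex.real_smul, smul_eq_mul, mul_one]
      exact (Complex.re_add_im v).symm
    calc L v = L (v.re • (1:ℂ) + v.im • Complex.I) := by rw [← hv]
    _ = v.re • L 1 + v.im • L Complex.I := by rw [map_add, map_smul, map_smul]
    _ = v * L 1 := by
        rw [hIb]
        simp only [Complex.real_smul, smul_eq_mul]
        conv_rhs => rw [← Complex.re_add_im v]
        ring
  refine (hasFDerivAt_of_restrictScalars ℝ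
      (f' := (ContinuousLinearMap.id ℂ ℂ).smulRight (L 1))
      h.hasFDerivAt ?_).differentiableAt
  ext v
  simp [key v, smul_eq_mul, mul_comm]
  exact (key v).symm

lemma const_on_of_fderiv_zero {g : ℂ → ℂ} {Ω : Set ℂ} (hΩ : IsOpen Ω)
    (hc : IsPreconnected Ω)
    (hdiff : ∀ z ∈ Ω, DifferentiableAt ℝ g z) (hd : ∀ z ∈ Ω, fderiv ℝ g z = 0)
    {a b : ℂ} (ha : a ∈ Ω) (hb : b ∈ Ω) : g a = g b := by
  have loc : ∀ z ∈ Ω, ∃ ε > 0, Metric.ball z ε ⊆ Ω ∧ ∀ w ∈ Metric.ball z ε, g w = g z := by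
    intro z hz
    obtain ⟨ε, hε, hball⟩ := Metric.isOpen_iff.1 hΩ z hz
    refine ⟨ε, hε, hball, fun w hw => ?_⟩
    refine (convex_ball z ε).is_const_of_fderivWithin_eq_zero
      (fun x hx => (hdiff x (hball hx)).differentiableWithinAt) ?_ hw (Metric.mem_ball_self hε)
    intro x hx
    rw [fderivWithin_of_isOpen Metric.isOpen_ball hx]
    exact hd x (hball hx)
  by_contra hne
  set U : Set ℂ := {w | w ∈ Ω ∧ g w = g b} with hU
  set V : Set ℂ := {w | w ∈ Ω ∧ g w ≠ g b} with hV
  have hUopen : IsOpen U := by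
    rw [isOpen_iff_mem_nhds]
    rintro w ⟨hwΩ, hwg⟩
    obtain ⟨ε, hε, hball, hconst⟩ := loc w hwΩ
    filter_upwards [Metric.ball_mem_nhds w hε] with x hx
    exact ⟨hball hx, by rw [hconst x hx, hwg]⟩
  have hVopen : IsOpen V := by
    rw [isOpen_iff_mem_nhds]
    rintro w ⟨hwΩ, hwg⟩
    obtain ⟨ε, hε, hball, hconst⟩ := loc w hwΩ
    filter_upwards [Metric.ball_mem_nhds w hε] with x hx
    exact ⟨hball hx, by rw [hconst x hx]; exact hwg⟩
  obtain ⟨x, _, ⟨_, hx1⟩, ⟨_, hx2⟩⟩ := hc U V hUopen hVopen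
    (fun w hw => by by_cases h : g w = g b
                    · exact Or.inl ⟨hw, h⟩
                    · exact Or.inr ⟨hw, h⟩)
    ⟨b, hb, hb, rfl⟩ ⟨a, ha, ha, hne⟩
  exact hx2 hx1

end Helpers
theorem stmt8 (Ω : Set ℂ) (hΩ : IsOpen Ω) (hconn : IsConnected Ω)
    (φ : ℂ → ℝ) (hφ : ContDiffOn ℝ 3 φ Ω) :
    DifferentiableOn ℂ
        (fun z => wz (wz (fun w => (φ w : ℂ))) z - (wz (fun w => (φ w : ℂ)) z) ^ 2) Ω ↔
      ∃ c : ℝ, ∀ z ∈ Ω,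
        -4 * Real.exp (-2 * φ z) * (wzbar (wz (fun w => (φ w : ℂ))) z).re = c := by
  set f : ℂ → ℂ := fun w => (φ w : ℂ) with hfdef
  set Q : ℂ → ℂ := fun z => wz (wz f) z - wz f z ^ 2 with hQdef
  set Kt : ℂ → ℂ := fun w => (-4:ℂ) * (Complex.exp ((-2:ℂ) * f w) * wzbar (wz f) w)
    with hKtdef
  set Kr : ℂ → ℝ := fun w => -4 * Real.exp (-2 * φ w) * (wzbar (wz f) w).re with hKrdef
  have hφC : ∀ z ∈ Ω, ContDiffAt ℝ 3 φ z := fun z hz => hφ.contDiffAt (hΩ.mem_nhds hz)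
  have hfC : ∀ z ∈ Ω, ContDiffAt ℝ 3 f z := fun z hz =>
    Complex.ofRealCLM.contDiff.contDiffAt.comp z (hφC z hz)
  have e23 : ((2:WithTop ℕ∞)+1) = 3 := by norm_num
  have e12 : ((1:WithTop ℕ∞)+1) = 2 := by norm_num
  have hA2 : ∀ z ∈ Ω, ContDiffAt ℝ 2 (wz f) z := fun z hz => contDiffAt_wz (e23 ▸ hfC z hz)
  have hAd : ∀ z ∈ Ω, DifferentiableAt ℝ (wz f) z := fun z hz =>
    (hA2 z hz).differentiableAt two_ne_zero
  have hwzAd : ∀ z ∈ Ω, DifferentiableAt ℝ (wz (wz f)) z := fun z hz =>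
    (contDiffAt_wz (e12 ▸ hA2 z hz)).differentiableAt one_ne_zero
  have hCd : ∀ z ∈ Ω, DifferentiableAt ℝ (wzbar (wz f)) z := fun z hz =>
    (contDiffAt_wzbar (e12 ▸ hA2 z hz)).differentiableAt one_ne_zero
  have hfd : ∀ z ∈ Ω, DifferentiableAt ℝ f z := fun z hz =>
    (hfC z hz).differentiableAt (by norm_num)
  have hm2fd : ∀ z ∈ Ω, DifferentiableAt ℝ (fun w => (-2:ℂ) * f w) z := fun z hz =>
    (hfd z hz).const_mul _
  have hexpd : ∀ z ∈ Ω, DifferentiableAt ℝ (fun w => Complex.exp ((-2:ℂ) * f w)) z := by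
    intro z hz
    exact (Complex.differentiable_exp (𝕜 := ℝ) ((-2:ℂ) * f z)).comp z (hm2fd z hz)
  have hKtdiff : ∀ z ∈ Ω, DifferentiableAt ℝ Kt z := by
    intro z hz
    rw [hKtdef]
    exact ((hexpd z hz).mul (hCd z hz)).const_mul _
  -- key differential identity
  have hkey : ∀ z ∈ Ω, wz Kt z = -4 * Complex.exp ((-2:ℂ) * f z) * wzbar Q z := by
    intro z hz
    have h1 : wz Kt z
        = (-4:ℂ) * wz (fun w => Complex.exp ((-2:ℂ) * f w) * wzbar (wz f) w) z := by
      rw [hKtdef]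
      exact wz_const_mul _ ((hexpd z hz).mul (hCd z hz))
    have h2 : wz (fun w => Complex.exp ((-2:ℂ) * f w) * wzbar (wz f) w) z
        = wz (fun w => Complex.exp ((-2:ℂ) * f w)) z * wzbar (wz f) z
          + Complex.exp ((-2:ℂ) * f z) * wz (wzbar (wz f)) z :=
      wz_mul (hexpd z hz) (hCd z hz)
    have h3 : wz (fun w => Complex.exp ((-2:ℂ) * f w)) z
        = Complex.exp ((-2:ℂ) * f z) * ((-2:ℂ) * wz f z) := by
      rw [wz_exp (hm2fd z hz), wz_const_mul _ (hfd z hz)]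
    have h4 : wz (wzbar (wz f)) z = wzbar (wz (wz f)) z := wz_wzbar_comm (hA2 z hz)
    have h5 : wzbar Q z = wzbar (wz (wz f)) z - 2 * wz f z * wzbar (wz f) z := by
      have e1 : wzbar Q z = wzbar (fun w => wz (wz f) w - wz f w * wz f w) z := by
        rw [hQdef]
        congr 1
        funext w
        ring
      rw [e1, wzbar_sub (hwzAd z hz) ((hAd z hz).fun_mul (hAd z hz)),
        wzbar_mul (hAd z hz) (hAd z hz)]
      ring
    rw [h1, h2, h3, h4, h5]
    ring
  -- realness of second derivatives of f
  have hH : ∀ z ∈ Ω, ∀ v w : ℂ, ∃ r : ℝ, fderiv ℝ (fderiv ℝ f) z v w = (r : ℂ) := by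
    intro z hz v w
    have hfdφ : ∀ x ∈ Ω, fderiv ℝ f x = Complex.ofRealCLM.comp (fderiv ℝ φ x) := by
      intro x hx
      have h := (Complex.ofRealCLM.hasFDerivAt.comp x
        (((hφC x hx).differentiableAt (by norm_num)).hasFDerivAt)).fderiv
      rw [← h]
      rfl
    have hdφw : DifferentiableAt ℝ (fun x => fderiv ℝ φ x w) z :=
      ((((hφC z hz).fderiv_right (m := 2) (by norm_num)).clm_apply
        contDiffAt_const)).differentiableAt two_ne_zero
    have hev : (fun x => fderiv ℝ f x w) =ᶠ[𝓝 z] (fun x => ((fderiv ℝ φ x w : ℝ) : ℂ)) := by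
      filter_upwards [hΩ.mem_nhds hz] with x hx
      rw [hfdφ x hx]
      simp
    have hd2 : DifferentiableAt ℝ (fderiv ℝ f) z :=
      ((hfC z hz).fderiv_right (m := 2) (by norm_num)).differentiableAt two_ne_zero
    have hdir := fderiv_dir w v hd2
    rw [← hdir, hev.fderiv_eq]
    refine ⟨fderiv ℝ (fun x => fderiv ℝ φ x w) z v, ?_⟩
    have hc : fderiv ℝ (fun x => ((fderiv ℝ φ x w : ℝ) : ℂ)) z
        = Complex.ofRealCLM.comp (fderiv ℝ (fun x => fderiv ℝ φ x w) z) := by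
      have h := (Complex.ofRealCLM.hasFDerivAt.comp z hdφw.hasFDerivAt).fderiv
      rw [← h]
      rfl
    rw [hc]
    rfl
  have hCreal : ∀ z ∈ Ω, ∃ r : ℝ, wzbar (wz f) z = (r : ℂ) := by
    intro z hz
    obtain ⟨r1, h1⟩ := hH z hz 1 1
    obtain ⟨r2, h2⟩ := hH z hz Complex.I Complex.I
    refine ⟨(r1 + r2)/4, ?_⟩
    rw [wzbar_wz_eq ((hfC z hz).of_le (by norm_num)), h1, h2]
    push_cast
    ring
  have hKt_real : ∀ z ∈ Ω, Kt z = ((Kr z : ℝ) : ℂ) := by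
    intro z hz
    obtain ⟨r, hr⟩ := hCreal z hz
    rw [hKtdef, hKrdef]
    simp only
    rw [hr]
    have hre : ((r:ℂ)).re = r := by simp
    rw [hre]
    have hfz : ((-2:ℂ) * f z) = ((-2 * φ z : ℝ) : ℂ) := by
      rw [hfdef]
      push_cast
      ring
    rw [hfz, ← Complex.ofReal_exp]
    push_cast
    ring
  constructor
  · intro hQhol
    have hbar : ∀ z ∈ Ω, wzbar Q z = 0 := fun z hz =>
      wzbar_eq_zero_of_diffC (hQhol.differentiableAt (hΩ.mem_nhds hz))
    have hfd0 : ∀ z ∈ Ω, fderiv ℝ Kt z = 0 := by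
      intro z hz
      have hev : Kt =ᶠ[𝓝 z] (fun w => ((Kr w : ℝ) : ℂ)) := by
        filter_upwards [hΩ.mem_nhds hz] with x hx
        exact hKt_real x hx
      have hKrdiff : DifferentiableAt ℝ Kr z := by
        have hre : Kr =ᶠ[𝓝 z] (fun w => (Kt w).re) := by
          filter_upwards [hΩ.mem_nhds hz] with x hx
          rw [hKt_real x hx]
          simp
        rw [hre.differentiableAt_iff]
        exact Complex.reCLM.differentiableAt.comp z (hKtdiff z hz)
      have hfr : fderiv ℝ Kt z = Complex.ofRealCLM.comp (fderiv ℝ Kr z) := by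
        rw [hev.fderiv_eq]
        exact (Complex.ofRealCLM.hasFDerivAt.comp z hKrdiff.hasFDerivAt).fderiv
      have hz0 : wz Kt z = 0 := by
        rw [hkey z hz, hbar z hz]
        ring
      unfold wz at hz0
      rw [hfr] at hz0 ⊢
      simp only [ContinuousLinearMap.coe_comp', Function.comp_apply,
        Complex.ofRealCLM_apply] at hz0
      set a := fderiv ℝ Kr z 1 with ha
      set b := fderiv ℝ Kr z Complex.I with hb
      have hab : a = 0 ∧ b = 0 := by
        have hre := congrArg Complex.re hz0
        have him := congrArg Complex.im hz0
        simp at hre him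
        exact ⟨hre, him⟩
      have hKr0 : fderiv ℝ Kr z = 0 := by
        ext v
        have hv : v = v.re • (1 : ℂ) + v.im • (Complex.I : ℂ) := by
          simp only [Complex.real_smul, smul_eq_mul, mul_one]
          exact (Complex.re_add_im v).symm
        rw [hv, map_add, map_smul, map_smul, ← ha, ← hb, hab.1, hab.2]
        simp
      rw [hKr0]
      ext v
      simp
    obtain ⟨z0, hz0⟩ := hconn.nonempty
    refine ⟨Kr z0, fun z hz => ?_⟩
    have hconst : Kt z = Kt z0 :=
      const_on_of_fderiv_zero hΩ hconn.isPreconnected hKtdiff hfd0 hz hz0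
    have : ((Kr z : ℝ) : ℂ) = ((Kr z0 : ℝ) : ℂ) := by
      rw [← hKt_real z hz, ← hKt_real z0 hz0]
      exact hconst
    have h' : Kr z = Kr z0 := by exact_mod_cast this
    rw [hKrdef] at h'
    exact h'
  · rintro ⟨c, hc⟩ z hz
    have hQdiffR : DifferentiableAt ℝ Q z := by
      rw [hQdef]
      exact (hwzAd z hz).sub ((hAd z hz).pow 2)
    refine (diffC_of_wzbar_eq_zero hQdiffR ?_).differentiableWithinAt
    have hev : Kt =ᶠ[𝓝 z] (fun _ => ((c : ℝ) : ℂ)) := by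
      filter_upwards [hΩ.mem_nhds hz] with x hx
      rw [hKt_real x hx]
      norm_cast
      rw [hKrdef]
      exact hc x hx
    have h0 : fderiv ℝ Kt z = 0 := by
      rw [hev.fderiv_eq]
      exact fderiv_const_apply _
    have hwz0 : wz Kt z = 0 := by
      unfold wz
      rw [h0]
      simp
    have hk := hkey z hz
    rw [hwz0] at hk
    have hne : (-4 : ℂ) * Complex.exp ((-2:ℂ) * f z) ≠ 0 := by
      simp [Complex.exp_ne_zero]
    rcases mul_eq_zero.1 hk.symm with h | h
    · exact absurd h hne
    · exact h
end

section
/- Let B be a real 2×2 matrix with det(Id + B) ≠ 0, let B̂ := (Id + B)⁻¹(Id − B), and let t ∈ ℝ satisfy det(Id + e^{−2t}·B̂) ≠ 0. Set A_t := cosh(t)·Id + sinh(t)·B and C_t := sinh(t)·Id + cosh(t)·B. Then A_t is invertible and (Id + e^{−2t}·B̂)⁻¹·(Id − e^{−2t}·B̂) = A_t⁻¹·C_t. Moreover, for every symmetric positive definite real 2×2 matrix g, setting ĝ := (Id + B)ᵀ·g·(Id + B): (1/4)·e^{2t}·(Id + e^{−2t}·B̂)ᵀ·ĝ·(Id + e^{−2t}·B̂)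 = A_tᵀ·g·A_t. -/
open Matrix

theorem stmt13 (B : Matrix (Fin 2) (Fin 2) ℝ) (h : (1 + B).det ≠ 0) (t : ℝ)
    (h2 : (1 + Real.exp (-2 * t) • ((1 + B)⁻¹ * (1 - B))).det ≠ 0)
    (g : Matrix (Fin 2) (Fin 2) ℝ) (hg : g.PosDef) :
    IsUnit (Real.cosh t • (1 : Matrix (Fin 2) (Fin 2) ℝ) + Real.sinh t • B).det ∧
    (1 + Real.exp (-2 * t) • ((1 + B)⁻¹ * (1 - B)))⁻¹ *
        (1 - Real.exp (-2 * t) • ((1 + B)⁻¹ * (1 - B))) =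
      (Real.cosh t • (1 : Matrix (Fin 2) (Fin 2) ℝ) + Real.sinh t • B)⁻¹ *
        (Real.sinh t • (1 : Matrix (Fin 2) (Fin 2) ℝ) + Real.cosh t • B) ∧
    ((1/4) * Real.exp (2 * t)) •
        ((1 + Real.exp (-2 * t) • ((1 + B)⁻¹ * (1 - B)))ᵀ * ((1 + B)ᵀ * g * (1 + B)) *
          (1 + Real.exp (-2 * t) • ((1 + B)⁻¹ * (1 - B)))) =
      (Real.cosh t • (1 : Matrix (Fin 2) (Fin 2) ℝ) + Real.sinh t • B)ᵀ * g *
        (Real.cosh t • (1 : Matrix (Fin 2) (Fin 2) ℝ) + Real.sinh t • B) := by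
  set s : ℝ := Real.exp (-2 * t) with hs
  set b : ℝ := Real.exp (-t) with hbdef
  set Bh : Matrix (Fin 2) (Fin 2) ℝ := (1 + B)⁻¹ * (1 - B) with hBh
  set A : Matrix (Fin 2) (Fin 2) ℝ := Real.cosh t • 1 + Real.sinh t • B with hA
  set C : Matrix (Fin 2) (Fin 2) ℝ := Real.sinh t • 1 + Real.cosh t • B with hC
  have hMu : IsUnit (1 + B).det := isUnit_iff_ne_zero.mpr h
  have hMinv : (1 + B) * (1 + B)⁻¹ = 1 := mul_nonsing_inv _ hMu
  have hab : Real.exp t * Real.exp (-t) = 1 := by rw [← Real.exp_add]; simp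
  have hbb : Real.exp (-t) * Real.exp (-t) = Real.exp (-2 * t) := by
    rw [← Real.exp_add]; ring_nf
  have e1 : 2 * b * Real.cosh t = 1 + s := by
    rw [Real.cosh_eq, hbdef, hs]; linear_combination hab + hbb
  have e2 : 2 * b * Real.sinh t = 1 - s := by
    rw [Real.sinh_eq, hbdef, hs]; linear_combination hab - hbb
  have key1 : (1 + B) * (1 + s • Bh) = (2 * b) • A := by
    have h1 : (1 + B) * (1 + s • Bh) = (1 + B) + s • (1 - B) := by
      rw [mul_add, mul_one, Matrix.mul_smul, hBh, ← Matrix.mul_assoc, hMinv,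
        Matrix.one_mul]
    rw [h1, hA, smul_add, smul_smul, smul_smul, e1, e2]
    module
  have key2 : (1 + B) * (1 - s • Bh) = (2 * b) • C := by
    have h1 : (1 + B) * (1 - s • Bh) = (1 + B) - s • (1 - B) := by
      rw [mul_sub, mul_one, Matrix.mul_smul, hBh, ← Matrix.mul_assoc, hMinv,
        Matrix.one_mul]
    rw [h1, hC, smul_add, smul_smul, smul_smul, e1, e2]
    module
  have hbne : (2 * b : ℝ) ≠ 0 := by positivity
  have hdetk := congrArg Matrix.det key1
  rw [det_mul, det_smul] at hdetk
  have hdetA : A.det ≠ 0 := by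
    intro h0
    rw [h0, mul_zero] at hdetk
    exact (mul_ne_zero h h2) hdetk
  have hAu : IsUnit A.det := isUnit_iff_ne_zero.mpr hdetA
  refine ⟨hAu, ?_, ?_⟩
  · -- second part
    have f1 : (1 + s • Bh) = (1 + B)⁻¹ * ((2 * b) • A) := by
      rw [← key1, ← Matrix.mul_assoc, nonsing_inv_mul _ hMu, Matrix.one_mul]
    have f2 : (1 - s • Bh) = (1 + B)⁻¹ * ((2 * b) • C) := by
      rw [← key2, ← Matrix.mul_assoc, nonsing_inv_mul _ hMu, Matrix.one_mul]
    haveI : Invertible (2 * b : ℝ) := invertibleOfNonzero hbne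
    have hsmulinv : ((2 * b) • A)⁻¹ = (2 * b)⁻¹ • A⁻¹ := by
      rw [_root_.Matrix.inv_smul A (2 * b) hAu]
      exact congrArg (· • A⁻¹) (invOf_eq_inv _)
    rw [f1, f2, Matrix.mul_inv_rev, nonsing_inv_nonsing_inv _ hMu, hsmulinv,
      Matrix.mul_assoc, ← Matrix.mul_assoc (1 + B), hMinv, Matrix.one_mul,
      Matrix.mul_smul, Matrix.smul_mul, smul_smul, mul_inv_cancel₀ hbne, one_smul]
  · -- third part
    have reassoc : (1 + s • Bh)ᵀ * ((1 + B)ᵀ * g * (1 + B)) * (1 + s • Bh) =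
        ((1 + B) * (1 + s • Bh))ᵀ * g * ((1 + B) * (1 + s • Bh)) := by
      simp only [Matrix.transpose_mul, Matrix.mul_assoc]
    rw [reassoc, key1, Matrix.transpose_smul, Matrix.smul_mul, Matrix.smul_mul,
      Matrix.mul_smul, smul_smul, smul_smul]
    have hc : 1 / 4 * Real.exp (2 * t) * (2 * b) * (2 * b) = 1 := by
      have : Real.exp (2 * t) * Real.exp (-t) * Real.exp (-t) = 1 := by
        rw [← Real.exp_add, ← Real.exp_add, show 2 * t + -t + -t = 0 by ring,
          Real.exp_zero]
      rw [hbdef]; linear_combination this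
    rw [hc, one_smul]
end

section
/- For every c ∈ ℝ, the following are equivalent: (i) for all θ ∈ (0, π), |4·cot²θ + c² − 2·csc²θ| ≤ 2·csc²θ; (ii) |c² − 2| ≤ 2; (iii) |c| ≤ 2. -/
theorem stmt19 (c : ℝ) :
    ((∀ θ ∈ Set.Ioo (0 : ℝ) Real.pi,
        |4 * (Real.cos θ / Real.sin θ) ^ 2 + c ^ 2 - 2 * ((Real.sin θ)⁻¹) ^ 2| ≤
          2 * ((Real.sin θ)⁻¹) ^ 2) ↔
      |c ^ 2 - 2| ≤ 2) ∧
    (|c ^ 2 - 2| ≤ 2 ↔ |c| ≤ 2) := by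
  have hpi := Real.pi_pos
  constructor
  · constructor
    · intro h
      have h2 := h (Real.pi / 2) ⟨by linarith, by linarith⟩
      simpa [Real.sin_pi_div_two, Real.cos_pi_div_two] using h2
    · intro h θ hθ
      have hs : 0 < Real.sin θ := Real.sin_pos_of_pos_of_lt_pi hθ.1 hθ.2
      have hs1 : Real.sin θ ≤ 1 := Real.sin_le_one θ
      have hcs : Real.cos θ ^ 2 = 1 - Real.sin θ ^ 2 := by
        have := Real.sin_sq_add_cos_sq θ; linarith
      have hsne : Real.sin θ ≠ 0 := ne_of_gt hs
      have key : 4 * (Real.cos θ / Real.sin θ) ^ 2 + c ^ 2 - 2 * ((Real.sin θ)⁻¹) ^ 2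
          = 2 * ((Real.sin θ)⁻¹) ^ 2 - 4 + c ^ 2 := by
        field_simp
        nlinarith [hcs]
      rw [key]
      have hinv : (1:ℝ) ≤ ((Real.sin θ)⁻¹) ^ 2 := by
        have : (1:ℝ) ≤ (Real.sin θ)⁻¹ := one_le_inv_iff₀.mpr ⟨hs, hs1⟩
        nlinarith
      have hc4 : c ^ 2 ≤ 4 := by
        rcases abs_le.mp h with ⟨h1, h2⟩; linarith
      rw [abs_le]
      constructor <;> nlinarith [sq_nonneg c]
  · constructor
    · intro h
      rcases abs_le.mp h with ⟨h1, h2⟩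
      rw [abs_le]
      constructor <;> nlinarith
    · intro h
      have h2 : c ^ 2 ≤ 4 := by nlinarith [abs_le.mp h, abs_nonneg c, sq_abs c]
      rw [abs_le]
      constructor <;> nlinarith [sq_nonneg c]
end
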